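/- Let n ≥ 2 be an integer, λ and c real numbers, and let Θ : (0,∞) → ℝ be positive and differentiable with (cosh r + c)'' + (Θ'(r)/Θ(r))·(cosh r + c)' + λ·(cosh r + c) = 0 for all r > 0 (i.e. Θ'(r)/Θ(r)·sinh r = −(1+λ)cosh r − cλ). If in addition Θ(r)/r^{n−1} tends to 1 as r → 0⁺, then 1 + λ + cλ = 1 − n, and Θ(r) = 2^{n−1} · (sinh(r/2))^{n−1} · (cosh(r/2))^{n−1+2cλ} for all r > 0. -/

import Mathlib

open Filter Topology

private lemma eq_of_log_eq' {x y : ℝ} (hx : 0 < x) (hy : 0 < y)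
    (h : Real.log x = Real.log y) : x = y := by
  rw [← Real.exp_log hx, ← Real.exp_log hy, h]

/-- a function with vanishing derivative on `(0,∞)` is constant there -/
private lemma const_of_deriv_zero {f : ℝ → ℝ} (hf : ∀ r > 0, HasDerivAt f 0 r) :
    ∀ x > 0, ∀ y > 0, f x = f y := by
  have key : ∀ x y : ℝ, 0 < x → x ≤ y → f y = f x := by
    intro x y hx hxy
    have := constant_of_has_deriv_right_zero (f := f) (a := x) (b := y)
      (fun z hz => ((hf z (lt_of_lt_of_le hx hz.1)).continuousAt).continuousWithinAt)
      (fun z hz => ((hf z (lt_of_lt_of_le hx hz.1)).hasDerivWithinAt))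
    exact this y ⟨hxy, le_refl y⟩
  intro x hx y hy
  rcases le_total x y with h | h
  · exact (key x y hx h).symm
  · exact key y x hy h

/-- `fun r => r/2` maps `𝓝[>] 0` to `𝓝[>] 0`. -/
private lemma tendsto_half : Tendsto (fun r : ℝ => r / 2) (𝓝[>] 0) (𝓝[>] 0) := by
  apply tendsto_nhdsWithin_of_tendsto_nhds_of_eventually_within
  · have : Tendsto (fun r : ℝ => r / 2) (𝓝 (0:ℝ)) (𝓝 (0/2 : ℝ)) :=
      (continuous_id.div_const 2).tendsto 0
    simpa using this.mono_left nhdsWithin_le_nhds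
  · filter_upwards [self_mem_nhdsWithin] with r (hr : 0 < r)
    exact half_pos hr

theorem stmt_5 (n : ℕ) (hn : 2 ≤ n) (lam c : ℝ) (Θ : ℝ → ℝ)
    (hΘpos : ∀ r > 0, 0 < Θ r)
    (hΘdiff : ∀ r > 0, DifferentiableAt ℝ Θ r)
    (hode : ∀ r > 0,
      (deriv Θ r / Θ r) * Real.sinh r = -(1 + lam) * Real.cosh r - c * lam)
    (hlim : Tendsto (fun r : ℝ => Θ r / r ^ ((n : ℝ) - 1)) (𝓝[>] 0) (𝓝 1)) :
    1 + lam + c * lam = 1 - n ∧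
    ∀ r > 0, Θ r = 2 ^ ((n : ℝ) - 1) * Real.sinh (r / 2) ^ ((n : ℝ) - 1)
      * Real.cosh (r / 2) ^ ((n : ℝ) - 1 + 2 * c * lam) := by
  -- Step 1: the log-potential L has zero derivative on (0,∞)
  have hLderiv : ∀ r > 0, HasDerivAt (fun r => Real.log (Θ r)
      + (1 + lam) * Real.log (Real.sinh r)
      + c * lam * (Real.log (Real.sinh (r / 2)) - Real.log (Real.cosh (r / 2)))) 0 r := by
    intro r hr
    have hs : 0 < Real.sinh r := Real.sinh_pos_iff.2 hr
    have hs2 : 0 < Real.sinh (r / 2) := Real.sinh_pos_iff.2 (half_pos hr)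
    have hc2 : 0 < Real.cosh (r / 2) := Real.cosh_pos _
    have h1 : HasDerivAt (fun r => Real.log (Θ r)) (deriv Θ r / Θ r) r :=
      ((hΘdiff r hr).hasDerivAt).log (hΘpos r hr).ne'
    have h2 : HasDerivAt (fun r => Real.log (Real.sinh r)) (Real.cosh r / Real.sinh r) r :=
      (Real.hasDerivAt_sinh r).log hs.ne'
    have hhalf : HasDerivAt (fun r : ℝ => r / 2) (1 / 2) r := by
      simpa using (hasDerivAt_id r).div_const 2
    have h3 : HasDerivAt (fun r => Real.sinh (r / 2)) (Real.cosh (r / 2) * (1 / 2)) r :=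
      by have := (Real.hasDerivAt_sinh (r / 2)).comp r hhalf; exact this
    have h4 : HasDerivAt (fun r => Real.cosh (r / 2)) (Real.sinh (r / 2) * (1 / 2)) r :=
      by have := (Real.hasDerivAt_cosh (r / 2)).comp r hhalf; exact this
    have h3l := h3.log hs2.ne'
    have h4l := h4.log hc2.ne'
    have hD := (h1.add (h2.const_mul (1 + lam))).add ((h3l.sub h4l).const_mul (c * lam))
    refine HasDerivAt.congr_deriv hD ?_
    symm
    have hQ : deriv Θ r / Θ r = (-(1 + lam) * Real.cosh r - c * lam) / Real.sinh r := by
      rw [eq_div_iff hs.ne']; exact hode r hr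
    have hsr : Real.sinh r = 2 * Real.sinh (r / 2) * Real.cosh (r / 2) := by
      rw [← Real.sinh_two_mul]; ring_nf
    have hpy : Real.cosh (r / 2) ^ 2 - Real.sinh (r / 2) ^ 2 = 1 :=
      Real.cosh_sq_sub_sinh_sq _
    rw [hQ, hsr]
    field_simp
    linear_combination (-(lam * c)) * hpy
  -- Step 2: L is constant, giving an explicit formula for Θ
  obtain ⟨K, hK⟩ : ∃ K : ℝ, ∀ r > 0, Real.log (Θ r) + (1 + lam) * Real.log (Real.sinh r)
      + c * lam * (Real.log (Real.sinh (r / 2)) - Real.log (Real.cosh (r / 2))) = K :=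
    ⟨_, fun r hr => const_of_deriv_zero hLderiv r hr 1 one_pos⟩
  have hform : ∀ r > 0, Θ r = Real.exp K * Real.sinh r ^ (-(1 + lam))
      * Real.sinh (r / 2) ^ (-(c * lam)) * Real.cosh (r / 2) ^ (c * lam) := by
    intro r hr
    have hs : 0 < Real.sinh r := Real.sinh_pos_iff.2 hr
    have hs2 : 0 < Real.sinh (r / 2) := Real.sinh_pos_iff.2 (half_pos hr)
    have hc2 : 0 < Real.cosh (r / 2) := Real.cosh_pos _
    have hrp1 : (0:ℝ) < Real.sinh r ^ (-(1 + lam)) := Real.rpow_pos_of_pos hs _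
    have hrp2 : (0:ℝ) < Real.sinh (r / 2) ^ (-(c * lam)) := Real.rpow_pos_of_pos hs2 _
    have hrp3 : (0:ℝ) < Real.cosh (r / 2) ^ (c * lam) := Real.rpow_pos_of_pos hc2 _
    apply eq_of_log_eq' (hΘpos r hr) (by positivity)
    rw [Real.log_mul (by positivity) hrp3.ne', Real.log_mul (by positivity) hrp2.ne',
      Real.log_mul (Real.exp_ne_zero K) hrp1.ne', Real.log_exp,
      Real.log_rpow hs, Real.log_rpow hs2, Real.log_rpow hc2]
    linarith [hK r hr]
  -- Step 3: limits of the elementary factors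
  have hslim : Tendsto (fun r : ℝ => Real.sinh r / r) (𝓝[>] 0) (𝓝 1) := by
    have h := Real.hasDerivAt_sinh 0
    rw [hasDerivAt_iff_tendsto_slope] at h
    have hsub : Set.Ioi (0:ℝ) ⊆ {(0:ℝ)}ᶜ := fun x hx => (ne_of_gt hx : x ≠ 0)
    have h2 := h.mono_left (nhdsWithin_mono 0 hsub)
    have heq : slope Real.sinh 0 = fun r => Real.sinh r / r := by
      funext r; simp [slope_fun_def]; ring
    rw [heq, Real.cosh_zero] at h2
    exact h2
  have hs2lim : Tendsto (fun r : ℝ => Real.sinh (r / 2) / r) (𝓝[>] 0) (𝓝 (1 / 2)) := by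
    have h := (hslim.comp tendsto_half).mul_const (1 / 2 : ℝ)
    rw [one_mul] at h
    refine h.congr' ?_
    filter_upwards [self_mem_nhdsWithin] with r (hr : (0:ℝ) < r)
    show Real.sinh (r / 2) / (r / 2) * (1 / 2) = Real.sinh (r / 2) / r
    field_simp
  have hclim : Tendsto (fun r : ℝ => Real.cosh (r / 2)) (𝓝[>] 0) (𝓝 1) := by
    have hcont : Continuous fun r : ℝ => Real.cosh (r / 2) :=
      Real.continuous_cosh.comp (continuous_id.div_const 2)
    have h := (hcont.tendsto 0).mono_left
      (nhdsWithin_le_nhds (s := Set.Ioi (0:ℝ)))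
    simpa using h
  -- limit of the "regular part"
  have hglim : Tendsto (fun r : ℝ => Real.exp K * (Real.sinh r / r) ^ (-(1 + lam))
      * (Real.sinh (r / 2) / r) ^ (-(c * lam)) * Real.cosh (r / 2) ^ (c * lam)) (𝓝[>] 0)
      (𝓝 (Real.exp K * ((1:ℝ) / 2) ^ (-(c * lam)))) := by
    have t1 := hslim.rpow (tendsto_const_nhds : Tendsto (fun _ : ℝ => -(1 + lam)) _ _)
      (Or.inl one_ne_zero)
    have t2 := hs2lim.rpow (tendsto_const_nhds : Tendsto (fun _ : ℝ => -(c * lam)) _ _)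
      (Or.inl (by norm_num))
    have t3 := hclim.rpow (tendsto_const_nhds : Tendsto (fun _ : ℝ => c * lam) _ _)
      (Or.inl one_ne_zero)
    have h := (((tendsto_const_nhds (x := Real.exp K)).mul t1).mul t2).mul t3
    simpa [Real.one_rpow] using h
  -- Step 4: pointwise, Θ(r)/r^(n-1) divided by the regular part is r^α
  have hpt : ∀ r > 0, (Θ r / r ^ ((n:ℝ) - 1)) / (Real.exp K
        * (Real.sinh r / r) ^ (-(1 + lam)) * (Real.sinh (r / 2) / r) ^ (-(c * lam))
        * Real.cosh (r / 2) ^ (c * lam))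
      = r ^ (-(1 + lam) - c * lam - ((n:ℝ) - 1)) := by
    intro r hr
    have hs : 0 < Real.sinh r := Real.sinh_pos_iff.2 hr
    have hs2 : 0 < Real.sinh (r / 2) := Real.sinh_pos_iff.2 (half_pos hr)
    have hc2 : 0 < Real.cosh (r / 2) := Real.cosh_pos _
    rw [hform r hr, Real.div_rpow hs.le hr.le, Real.div_rpow hs2.le hr.le]
    have huv : r ^ (-(1 + lam)) * r ^ (-(c * lam))
        = r ^ (-(1 + lam) - c * lam - ((n:ℝ) - 1)) * r ^ ((n:ℝ) - 1) := by
      rw [← Real.rpow_add hr, ← Real.rpow_add hr]; ring_nf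
    set P := Real.sinh r ^ (-(1 + lam)) with hP
    set Q := Real.sinh (r / 2) ^ (-(c * lam)) with hQQ
    set R := Real.cosh (r / 2) ^ (c * lam) with hR
    set u := r ^ (-(1 + lam)) with hu
    set v := r ^ (-(c * lam)) with hv
    set w := r ^ ((n:ℝ) - 1) with hw
    set z := r ^ (-(1 + lam) - c * lam - ((n:ℝ) - 1)) with hz
    have e1 : (0:ℝ) < P := Real.rpow_pos_of_pos hs _
    have e2 : (0:ℝ) < Q := Real.rpow_pos_of_pos hs2 _
    have e3 : (0:ℝ) < R := Real.rpow_pos_of_pos hc2 _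
    have e4 : (0:ℝ) < u := Real.rpow_pos_of_pos hr _
    have e5 : (0:ℝ) < v := Real.rpow_pos_of_pos hr _
    have e6 : (0:ℝ) < w := Real.rpow_pos_of_pos hr _
    field_simp
    linear_combination huv
  -- Step 5: hence r^α converges to a positive limit
  have hGpos : 0 < Real.exp K * ((1:ℝ) / 2) ^ (-(c * lam)) := by positivity
  have hrlim : Tendsto (fun r : ℝ => r ^ (-(1 + lam) - c * lam - ((n:ℝ) - 1))) (𝓝[>] 0)
      (𝓝 (1 / (Real.exp K * ((1:ℝ) / 2) ^ (-(c * lam))))) := by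
    have h := hlim.div hglim hGpos.ne'
    refine h.congr' ?_
    filter_upwards [self_mem_nhdsWithin] with r (hr : (0:ℝ) < r)
    exact hpt r hr
  -- Step 6: doubling trick gives α = 0 and the limit value 1
  set Lv : ℝ := 1 / (Real.exp K * ((1:ℝ) / 2) ^ (-(c * lam))) with hLv
  have hLvpos : 0 < Lv := by positivity
  have hc1 : Tendsto (fun r : ℝ => (r / 2) ^ (-(1 + lam) - c * lam - ((n:ℝ) - 1)))
      (𝓝[>] 0) (𝓝 Lv) := hrlim.comp tendsto_half
  have hc2' : Tendsto (fun r : ℝ => r ^ (-(1 + lam) - c * lam - ((n:ℝ) - 1))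
      * ((1:ℝ) / 2) ^ (-(1 + lam) - c * lam - ((n:ℝ) - 1))) (𝓝[>] 0) (𝓝 Lv) := by
    refine hc1.congr' ?_
    filter_upwards [self_mem_nhdsWithin] with r (hr : (0:ℝ) < r)
    rw [div_eq_mul_inv, Real.mul_rpow hr.le (by norm_num : (0:ℝ) ≤ 2⁻¹)]
    norm_num
  have hc2'' : Tendsto (fun r : ℝ => r ^ (-(1 + lam) - c * lam - ((n:ℝ) - 1))
      * ((1:ℝ) / 2) ^ (-(1 + lam) - c * lam - ((n:ℝ) - 1))) (𝓝[>] 0)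
      (𝓝 (Lv * ((1:ℝ) / 2) ^ (-(1 + lam) - c * lam - ((n:ℝ) - 1)))) :=
    hrlim.mul_const _
  have huniq : Lv * ((1:ℝ) / 2) ^ (-(1 + lam) - c * lam - ((n:ℝ) - 1)) = Lv :=
    tendsto_nhds_unique hc2'' hc2'
  have hhp : ((1:ℝ) / 2) ^ (-(1 + lam) - c * lam - ((n:ℝ) - 1)) = 1 := by
    have := mul_right_cancel₀ hLvpos.ne' (by linarith [huniq] :
      ((1:ℝ) / 2) ^ (-(1 + lam) - c * lam - ((n:ℝ) - 1)) * Lv = 1 * Lv)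
    exact this
  have hα : -(1 + lam) - c * lam - ((n:ℝ) - 1) = 0 := by
    rw [Real.rpow_def_of_pos (by norm_num : (0:ℝ) < 1 / 2), Real.exp_eq_one_iff] at hhp
    have hlh : Real.log ((1:ℝ) / 2) ≠ 0 := by
      rw [one_div, Real.log_inv]
      simpa using Real.log_ne_zero_of_pos_of_ne_one (by norm_num : (0:ℝ) < 2) (by norm_num)
    rcases mul_eq_zero.1 hhp with h | h
    · exact absurd h hlh
    · exact h
  have hLv1 : Lv = 1 := by
    have h1 : Tendsto (fun _ : ℝ => (1:ℝ)) (𝓝[>] (0:ℝ)) (𝓝 Lv) := by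
      have := hrlim
      rw [hα] at this
      simpa [Real.rpow_zero] using this
    exact tendsto_nhds_unique h1 tendsto_const_nhds
  -- the two conclusions
  constructor
  · push_cast at hα ⊢
    linarith
  · -- value of K
    have hEK : Real.exp K * ((1:ℝ) / 2) ^ (-(c * lam)) = 1 := by
      rw [hLv] at hLv1
      field_simp at hLv1
      linarith
    have hKval : K = -(c * lam) * Real.log 2 := by
      have h := congrArg Real.log hEK
      rw [Real.log_mul (Real.exp_ne_zero K)
        (Real.rpow_pos_of_pos (by norm_num : (0:ℝ) < 1 / 2) _).ne',
        Real.log_exp, Real.log_rpow (by norm_num : (0:ℝ) < 1 / 2), Real.log_one,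
        one_div, Real.log_inv] at h
      linarith
    intro r hr
    have hs : 0 < Real.sinh r := Real.sinh_pos_iff.2 hr
    have hs2 : 0 < Real.sinh (r / 2) := Real.sinh_pos_iff.2 (half_pos hr)
    have hc2 : 0 < Real.cosh (r / 2) := Real.cosh_pos _
    have hsr : Real.sinh r = 2 * Real.sinh (r / 2) * Real.cosh (r / 2) := by
      rw [← Real.sinh_two_mul]; ring_nf
    have hlogS : Real.log (Real.sinh r)
        = Real.log 2 + Real.log (Real.sinh (r / 2)) + Real.log (Real.cosh (r / 2)) := by
      rw [hsr, Real.log_mul (by positivity) hc2.ne', Real.log_mul (by norm_num) hs2.ne']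
    have p1 : (0:ℝ) < (2:ℝ) ^ ((n:ℝ) - 1) := Real.rpow_pos_of_pos (by norm_num) _
    have p2 : (0:ℝ) < Real.sinh (r / 2) ^ ((n:ℝ) - 1) := Real.rpow_pos_of_pos hs2 _
    have p3 : (0:ℝ) < Real.cosh (r / 2) ^ ((n:ℝ) - 1 + 2 * c * lam) :=
      Real.rpow_pos_of_pos hc2 _
    apply eq_of_log_eq' (hΘpos r hr) (by positivity)
    rw [Real.log_mul (by positivity) p3.ne', Real.log_mul p1.ne' p2.ne',
      Real.log_rpow (by norm_num : (0:ℝ) < 2), Real.log_rpow hs2, Real.log_rpow hc2]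
    linear_combination (hK r hr) - (1 + lam) * hlogS + hKval
      + (Real.log 2 + Real.log (Real.sinh (r / 2)) + Real.log (Real.cosh (r / 2))) * hα
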